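/- For a unit-demand buyer, any vector y with 0 ≤ y ≤ x* componentwise, where x* is the allocation vector of a deterministic item pricing p under available set S, lies in the convex hull of the finite set {x_T : T ⊆ S} of allocation vectors of the restrictions of p to subsets T of S (together with the zero vector x_∅). -/

import Mathlib

open scoped Classical

/-- `Buys v p T j` : a unit-demand buyer of type `v`, facing item prices `p` with
available item set `T`, purchases item `j` (least-index maximizer of `v k - p k` over
`T`, provided the maximum utility is nonnegative). -/
def Buys {m : ℕ} (v p : Fin m → ℝ) (T : Finset (Fin m)) (j : Fin m) : Prop :=
  j ∈ T ∧ 0 ≤ v j - p j ∧ ∀ k ∈ T, v k - p k < v j - p j ∨ (v k - p k = v j - p j ∧ j ≤ k)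

/-- Allocation vector of pricing `p` restricted to available set `T`. -/
noncomputable def allocVec {m k : ℕ} (V : Fin k → Fin m → ℝ) (w : Fin k → ℝ)
    (p : Fin m → ℝ) (T : Finset (Fin m)) : Fin m → ℝ :=
  fun j => ∑ t, w t * (if Buys (V t) p T j then (1 : ℝ) else 0)

lemma buys_mono {m : ℕ} {v p : Fin m → ℝ} {T S : Finset (Fin m)} (hTS : T ⊆ S)
    {j : Fin m} (hj : j ∈ T) (h : Buys v p S j) : Buys v p T j :=
  ⟨hj, h.2.1, fun k hk => h.2.2 k (hTS hk)⟩

lemma allocVec_nonneg {m k : ℕ} (V : Fin k → Fin m → ℝ) (w : Fin k → ℝ)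
    (hw : ∀ t, 0 ≤ w t) (p : Fin m → ℝ) (T : Finset (Fin m)) (j : Fin m) :
    0 ≤ allocVec V w p T j := by
  apply Finset.sum_nonneg
  intro t _
  have : (0:ℝ) ≤ if Buys (V t) p T j then (1:ℝ) else 0 := by positivity
  exact mul_nonneg (hw t) this

lemma allocVec_mono {m k : ℕ} (V : Fin k → Fin m → ℝ) (w : Fin k → ℝ)
    (hw : ∀ t, 0 ≤ w t) (p : Fin m → ℝ) {T S : Finset (Fin m)} (hTS : T ⊆ S)
    {j : Fin m} (hj : j ∈ T) :
    allocVec V w p S j ≤ allocVec V w p T j := by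
  apply Finset.sum_le_sum
  intro t _
  apply mul_le_mul_of_nonneg_left _ (hw t)
  by_cases h : Buys (V t) p S j
  · simp [h, buys_mono hTS hj h]
  · simp only [h, if_false]
    split <;> norm_num

lemma allocVec_not_mem {m k : ℕ} (V : Fin k → Fin m → ℝ) (w : Fin k → ℝ)
    (p : Fin m → ℝ) {T : Finset (Fin m)} {j : Fin m} (hj : j ∉ T) :
    allocVec V w p T j = 0 := by
  apply Finset.sum_eq_zero
  intro t _
  have : ¬ Buys (V t) p T j := fun h => hj h.1
  simp [this]

lemma aux {m k : ℕ} (V : Fin k → Fin m → ℝ) (w : Fin k → ℝ)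
    (hw : ∀ t, 0 ≤ w t) (p : Fin m → ℝ) :
    ∀ n (S : Finset (Fin m)), S.card ≤ n → ∀ y : Fin m → ℝ,
      (∀ j, 0 ≤ y j) → (∀ j, y j ≤ allocVec V w p S j) → (∀ j ∉ S, y j = 0) →
      y ∈ convexHull ℝ {z : Fin m → ℝ | ∃ T ⊆ S, z = allocVec V w p T} := by
  intro n
  induction n with
  | zero =>
    intro S hcard y hy0 hyx hyS
    have hS : S = ∅ := Finset.card_eq_zero.mp (Nat.le_zero.mp hcard)
    subst hS
    apply subset_convexHull
    refine ⟨∅, Finset.Subset.refl _, funext fun j => ?_⟩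
    rw [hyS j (Finset.notMem_empty j), allocVec_not_mem V w p (Finset.notMem_empty j)]
  | succ n ih =>
    intro S hcard y hy0 hyx hyS
    set x := allocVec V w p S with hxdef
    by_cases hy : y = x
    · exact subset_convexHull ℝ _ ⟨S, Finset.Subset.refl _, hy⟩
    -- find coordinate where y < x
    obtain ⟨j0, hj0⟩ : ∃ j0, y j0 ≠ x j0 := by
      by_contra h; push_neg at h; exact hy (funext h)
    have hj0lt : y j0 < x j0 := lt_of_le_of_ne (hyx j0) hj0
    have hxj0 : 0 < x j0 := lt_of_le_of_lt (hy0 j0) hj0lt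
    have hj0S : j0 ∈ S := by
      by_contra h
      exact absurd (allocVec_not_mem V w p h) (ne_of_gt hxj0)
    set F := S.filter (fun j => 0 < x j) with hF
    have hj0F : j0 ∈ F := Finset.mem_filter.mpr ⟨hj0S, hxj0⟩
    obtain ⟨js, hjsF, hmin⟩ := F.exists_min_image (fun j => y j / x j) ⟨j0, hj0F⟩
    have hxjs : 0 < x js := (Finset.mem_filter.mp hjsF).2
    have hjsS : js ∈ S := (Finset.mem_filter.mp hjsF).1
    set lam := y js / x js with hlam
    have hlam0 : 0 ≤ lam := div_nonneg (hy0 js) hxjs.le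
    have hlam1 : lam < 1 := lt_of_le_of_lt (hmin j0 hj0F) ((div_lt_one hxj0).mpr hj0lt)
    have h1l : 0 < 1 - lam := by linarith
    have key : ∀ j, lam * x j ≤ y j := by
      intro j
      by_cases hxj : 0 < x j
      · have hjS : j ∈ S := by
          by_contra h
          exact absurd (allocVec_not_mem V w p h) (ne_of_gt hxj)
        have := hmin j (Finset.mem_filter.mpr ⟨hjS, hxj⟩)
        calc lam * x j ≤ (y j / x j) * x j := by
              exact mul_le_mul_of_nonneg_right this hxj.le
          _ = y j := div_mul_cancel₀ _ (ne_of_gt hxj)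
      · have hxj0 : x j = 0 :=
          le_antisymm (not_lt.mp hxj) (allocVec_nonneg V w hw p S j)
        rw [hxj0, mul_zero]; exact hy0 j
    set S' := S.erase js with hS'
    set z : Fin m → ℝ := fun j => (y j - lam * x j) / (1 - lam) with hz
    have hznot : ∀ j ∉ S', z j = 0 := by
      intro j hj
      by_cases hjS : j ∈ S
      · have hjjs : j = js := by
          by_contra h
          exact hj (Finset.mem_erase.mpr ⟨h, hjS⟩)
        subst hjjs
        simp only [hz, hlam]
        rw [div_mul_cancel₀ _ (ne_of_gt hxjs), sub_self, zero_div]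
      · have h1 : y j = 0 := hyS j hjS
        have h2 : x j = 0 := allocVec_not_mem V w p hjS
        simp [hz, h1, h2]
    have hz0 : ∀ j, 0 ≤ z j := fun j =>
      div_nonneg (sub_nonneg.mpr (key j)) h1l.le
    have hzx : ∀ j, z j ≤ allocVec V w p S' j := by
      intro j
      by_cases hjS' : j ∈ S'
      · have h1 : z j ≤ x j := by
          rw [hz, div_le_iff₀ h1l]
          nlinarith [hyx j]
        exact h1.trans (allocVec_mono V w hw p (Finset.erase_subset _ _) hjS')
      · rw [hznot j hjS']
        exact allocVec_nonneg V w hw p S' j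
    have hcard' : S'.card ≤ n := by
      have h1 : S'.card = S.card - 1 := by rw [hS']; exact Finset.card_erase_of_mem hjsS
      have h2 : 0 < S.card := Finset.card_pos.mpr ⟨js, hjsS⟩
      omega
    have hzmem := ih S' hcard' z hz0 hzx hznot
    have hzmem' : z ∈ convexHull ℝ {z : Fin m → ℝ | ∃ T ⊆ S, z = allocVec V w p T} := by
      refine convexHull_mono ?_ hzmem
      rintro v ⟨T, hT, rfl⟩
      exact ⟨T, hT.trans (Finset.erase_subset _ _), rfl⟩
    have hxmem : x ∈ convexHull ℝ {z : Fin m → ℝ | ∃ T ⊆ S, z = allocVec V w p T} :=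
      subset_convexHull ℝ _ ⟨S, Finset.Subset.refl _, rfl⟩
    have hcomb := (convex_convexHull ℝ {z : Fin m → ℝ | ∃ T ⊆ S, z = allocVec V w p T})
      hxmem hzmem' hlam0 h1l.le (by ring)
    have hyeq : y = lam • x + (1 - lam) • z := by
      funext j
      simp only [Pi.add_apply, Pi.smul_apply, smul_eq_mul, hz]
      field_simp
      ring
    rw [hyeq]
    exact hcomb

/-- any `y` with `0 ≤ y ≤ x_S` componentwise (and `y j = 0` for `j ∉ S`),
where `x_S` is the allocation vector of the deterministic item pricing `p` under
available set `S`, lies in the convex hull of the allocation vectors `{x_T : T ⊆ S}`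
of the restrictions of `p` to subsets of `S`. -/
theorem stmt2 {m k : ℕ} (V : Fin k → Fin m → ℝ) (w : Fin k → ℝ)
    (hw : ∀ t, 0 ≤ w t) (hw1 : ∑ t, w t = 1)
    (p : Fin m → ℝ) (S : Finset (Fin m)) (y : Fin m → ℝ)
    (hy0 : ∀ j, 0 ≤ y j) (hyx : ∀ j, y j ≤ allocVec V w p S j)
    (hyS : ∀ j ∉ S, y j = 0) :
    y ∈ convexHull ℝ {z : Fin m → ℝ | ∃ T ⊆ S, z = allocVec V w p T} := by
  exact aux V w hw p S.card S le_rfl y hy0 hyx hyS
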